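/- Let p > 2, let i ≥ 1 be an integer, and let γ ∈ (0,1/2). Let A and B be bounded operators. Then: (1) if ‖A‖_{p,iγ} < ∞ and ‖B‖_{p,iγ} < ∞ then ‖AB‖_{p−1,(i+1)γ} ≤ C_p·‖A‖_{p,iγ}·‖B‖_{p,iγ}; (2) if ‖A‖_{p,(i−1)γ} < ∞ and ‖B‖_{p−1,iγ} < ∞ then ‖AB‖_{p−1,iγ} ≤ C_p·‖A‖_{p,(i−1)γ}·‖B‖_{p−1,iγ}; (3) if ‖A‖_{p+1,(i−1)γ} < ∞ and ‖B‖_{p−1,(i+1)γ} < ∞ then ‖AB‖_{p−1,(i+1)γ} ≤ 2C_p·‖A‖_{p+1,(i−1)γ}·‖B‖_{p−1,(i+1)γ}. The same three bounds hold with the order of the factors A and B reversed. Here C_p := 2^{p+1}(1 + 2ζ(p−1)). -/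

import Mathlib

noncomputable section

open ContinuousLinearMap

variable {𝓗 : Type*} [NormedAddCommGroup 𝓗] [InnerProductSpace ℂ 𝓗] [CompleteSpace 𝓗]

/-- `⟨x⟩ := max {1, |x|}`. -/
def jap (x : ℝ) : ℝ := max 1 |x|

/-- `(Pₙ)_{n≥1}` is a family of mutually orthogonal nonzero orthogonal projections
with `Σₙ Pₙ = I` in the strong sense. -/
def ProjFamily (P : ℕ+ → 𝓗 →L[ℂ] 𝓗) : Prop :=
  (∀ n, IsSelfAdjoint (P n)) ∧ (∀ n, (P n).comp (P n) = P n) ∧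
  (∀ m n, m ≠ n → (P m).comp (P n) = 0) ∧ (∀ n, P n ≠ 0) ∧
  (∀ ψ : 𝓗, HasSum (fun n => P n ψ) ψ)

/-- The quantity `⟨m-n⟩^p · max{m,n}^(2δ) · ‖Pₘ A Pₙ‖`; the norm `‖A‖_{p,δ}` is its
supremum over `m, n ≥ 1`. -/
def wnorm (P : ℕ+ → 𝓗 →L[ℂ] 𝓗) (p δ : ℝ) (A : 𝓗 →L[ℂ] 𝓗) (m n : ℕ+) : ℝ :=
  jap (((m : ℕ) : ℝ) - ((n : ℕ) : ℝ)) ^ p * (((max m n : ℕ+) : ℕ) : ℝ) ^ (2 * δ) *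
    ‖(P m).comp (A.comp (P n))‖

/-- `A` is diagonal with respect to the family `P`. -/
def IsDiag (P : ℕ+ → 𝓗 →L[ℂ] 𝓗) (A : 𝓗 →L[ℂ] 𝓗) : Prop :=
  ∀ m n, m ≠ n → (P m).comp (A.comp (P n)) = 0

/-- `Dom(H) = {ψ : Σₙ Eₙ²‖Pₙψ‖² < ∞}`. -/
def HDom (P : ℕ+ → 𝓗 →L[ℂ] 𝓗) (E : ℕ+ → ℝ) : Set 𝓗 :=
  {ψ | Summable fun n => (E n) ^ 2 * ‖P n ψ‖ ^ 2}

/-- The form domain `Q_H = {ψ : Σₙ Eₙ‖Pₙψ‖² < ∞}`. -/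
def QDom (P : ℕ+ → 𝓗 →L[ℂ] 𝓗) (E : ℕ+ → ℝ) : Set 𝓗 :=
  {ψ | Summable fun n => E n * ‖P n ψ‖ ^ 2}

/-- `h = Hψ`, i.e. `h = Σₙ Eₙ Pₙ ψ`. -/
def IsHSum (P : ℕ+ → 𝓗 →L[ℂ] 𝓗) (E : ℕ+ → ℝ) (ψ h : 𝓗) : Prop :=
  HasSum (fun n => (E n : ℂ) • P n ψ) h

/-- `U` is unitary. -/
def IsUnitaryOp (U : 𝓗 →L[ℂ] 𝓗) : Prop := U * star U = 1 ∧ star U * U = 1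

/-- A family of bounded operators which is `C¹` in the strong sense. -/
def StrongC1 (V : ℝ → 𝓗 →L[ℂ] 𝓗) : Prop := ∀ ψ : 𝓗, ContDiff ℝ 1 fun t => V t ψ

/-- `U(t,s)` is a propagator for `H + V(t)`. -/
def IsPropagator (P : ℕ+ → 𝓗 →L[ℂ] 𝓗) (E : ℕ+ → ℝ) (V : ℝ → 𝓗 →L[ℂ] 𝓗)
    (U : ℝ → ℝ → 𝓗 →L[ℂ] 𝓗) : Prop :=
  (∀ t s, IsUnitaryOp (U t s)) ∧
  (∀ ψ : 𝓗, Continuous fun ts : ℝ × ℝ => U ts.1 ts.2 ψ) ∧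
  (∀ t, U t t = 1) ∧
  (∀ t s r, (U t s).comp (U s r) = U t r) ∧
  (∀ t s, ⇑(U t s) '' HDom P E = HDom P E) ∧
  (∀ s : ℝ, ∀ ψ ∈ HDom P E, ∀ t : ℝ, ∃ d : 𝓗,
    HasDerivAt (fun τ => U τ s ψ) d t ∧
    ∀ h : 𝓗, IsHSum P E (U t s ψ) h → Complex.I • d = h + V t (U t s ψ))

/-- The Riemann zeta function `ζ(s) = Σ_{n≥1} n^{-s}` (for real `s > 1`). -/
def rzeta (s : ℝ) : ℝ := ∑' n : ℕ+, (((n : ℕ) : ℝ) ^ s)⁻¹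

/-- The constant `C_p = 2^(p+1) (1 + 2 ζ(p-1))`. -/
def Cconst (p : ℝ) : ℝ := 2 ^ (p + 1) * (1 + 2 * rzeta (p - 1))


/-! ### Auxiliary lemmas -/

section Aux

lemma one_le_jap (x : ℝ) : 1 ≤ jap x := le_max_left _ _
lemma abs_le_jap (x : ℝ) : |x| ≤ jap x := le_max_right _ _
lemma jap_sub_comm (a b : ℝ) : jap (a - b) = jap (b - a) := by
  unfold jap; rw [abs_sub_comm]

lemma aux_one_le_rpow {x e : ℝ} (hx : 1 ≤ x) (he : 0 ≤ e) : 1 ≤ x ^ e := by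
  calc (1:ℝ) = 1 ^ e := (Real.one_rpow e).symm
  _ ≤ x ^ e := Real.rpow_le_rpow (by norm_num) hx he

lemma aux_core {q x y z : ℝ} (hq : 0 ≤ q) (hx : 1 ≤ x) (hy : 1 ≤ y) (hz0 : 0 ≤ z)
    (hz : z ≤ 2 * max x y) :
    z ^ q * ((x ^ q)⁻¹ * (y ^ q)⁻¹) ≤ 2 ^ q * ((x ^ q)⁻¹ + (y ^ q)⁻¹) := by
  have hx0 : (0:ℝ) < x := lt_of_lt_of_le one_pos hx
  have hy0 : (0:ℝ) < y := lt_of_lt_of_le one_pos hy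
  have hxq : (0:ℝ) < x ^ q := Real.rpow_pos_of_pos hx0 q
  have hyq : (0:ℝ) < y ^ q := Real.rpow_pos_of_pos hy0 q
  have hzq : z ^ q ≤ 2 ^ q * (max x y) ^ q := by
    rw [← Real.mul_rpow (by norm_num) (le_trans (le_of_lt hx0) (le_max_left _ _))]
    exact Real.rpow_le_rpow hz0 hz hq
  have h2q : (0:ℝ) < (2:ℝ) ^ q := Real.rpow_pos_of_pos (by norm_num) q
  rcases le_total x y with h | h
  · have hmax : max x y = y := max_eq_right h
    calc z ^ q * ((x ^ q)⁻¹ * (y ^ q)⁻¹)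
        ≤ 2 ^ q * y ^ q * ((x ^ q)⁻¹ * (y ^ q)⁻¹) := by
          apply mul_le_mul_of_nonneg_right _ (by positivity)
          rw [hmax] at hzq; exact hzq
      _ = 2 ^ q * (x ^ q)⁻¹ := by field_simp
      _ ≤ 2 ^ q * ((x ^ q)⁻¹ + (y ^ q)⁻¹) := by
          apply mul_le_mul_of_nonneg_left _ (le_of_lt h2q)
          simp [le_of_lt hyq, inv_nonneg.2 (le_of_lt hyq)]
  · have hmax : max x y = x := max_eq_left h
    calc z ^ q * ((x ^ q)⁻¹ * (y ^ q)⁻¹)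
        ≤ 2 ^ q * x ^ q * ((x ^ q)⁻¹ * (y ^ q)⁻¹) := by
          apply mul_le_mul_of_nonneg_right _ (by positivity)
          rw [hmax] at hzq; exact hzq
      _ = 2 ^ q * (y ^ q)⁻¹ := by field_simp
      _ ≤ 2 ^ q * ((x ^ q)⁻¹ + (y ^ q)⁻¹) := by
          apply mul_le_mul_of_nonneg_left _ (le_of_lt h2q)
          simp [le_of_lt hxq, inv_nonneg.2 (le_of_lt hxq)]

lemma mul3_ge {A u x : ℝ} (hA : 0 ≤ A) (hu : 1 ≤ u) (hx : 1 ≤ x) :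
    A ≤ u * A * x := by
  calc A = 1 * A * 1 := by ring
  _ ≤ u * A * x :=
      mul_le_mul (mul_le_mul hu le_rfl hA (by linarith)) hx (by norm_num)
        (mul_nonneg (by linarith) hA)

section Weights
variable {r kk M u v x y : ℝ}
  (hr0 : 0 < r) (hr1 : r ≤ 1) (hkk : 1 ≤ kk)
  (hM : 1 ≤ M) (hu : 1 ≤ u) (hv : 1 ≤ v) (hx : 1 ≤ x) (hy : 1 ≤ y)

lemma rfactor {s : ℝ} (hr0 : 0 < r) (hr1 : r ≤ 1) (hs : 1 ≤ s)
    (hM : 1 ≤ M) (hv : 1 ≤ v) (hx : 1 ≤ x) (hMvx : M ≤ 2 * v * x) :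
    M ^ r ≤ 2 * (v ^ (s * r) * x) := by
  have h1 : M ^ r ≤ (2 * v * x) ^ r :=
    Real.rpow_le_rpow (by linarith) hMvx (le_of_lt hr0)
  have h2 : (2 * v * x) ^ r = 2 ^ r * v ^ r * x ^ r := by
    rw [Real.mul_rpow (by positivity) (by positivity),
      Real.mul_rpow (by norm_num) (by positivity)]
  have h3 : (2:ℝ) ^ r ≤ 2 := by
    calc (2:ℝ) ^ r ≤ 2 ^ (1:ℝ) := Real.rpow_le_rpow_of_exponent_le (by norm_num) hr1
    _ = 2 := Real.rpow_one 2
  have h4 : v ^ r ≤ v ^ (s * r) := Real.rpow_le_rpow_of_exponent_le hv (by nlinarith)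
  have h5 : x ^ r ≤ x := by
    calc x ^ r ≤ x ^ (1:ℝ) := Real.rpow_le_rpow_of_exponent_le hx hr1
    _ = x := Real.rpow_one x
  have hvr : (0:ℝ) ≤ v ^ r := Real.rpow_nonneg (by linarith) r
  have hxr : (0:ℝ) ≤ x ^ r := Real.rpow_nonneg (by linarith) r
  calc M ^ r ≤ 2 ^ r * v ^ r * x ^ r := by rw [← h2]; exact h1
  _ ≤ 2 * v ^ (s*r) * x :=
      mul_le_mul (mul_le_mul h3 h4 hvr (by norm_num)) h5 hxr
        (mul_nonneg (by norm_num) (Real.rpow_nonneg (by linarith) _))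
  _ = 2 * (v ^ (s*r) * x) := by ring

include hr0 hr1 hkk hM hu hv hx in
lemma auxW2 (hMor : M ≤ u ∨ M ≤ v) (hMvx : M ≤ 2 * v * x) :
    M ^ (kk * r) ≤ 2 * (u ^ ((kk - 1) * r) * v ^ (kk * r) * x) := by
  have hM0 : (0:ℝ) < M := by linarith
  have hu1 : (1:ℝ) ≤ u ^ ((kk - 1) * r) := aux_one_le_rpow hu (by nlinarith)
  rcases hMor with h | h
  · have e1 : M ^ (kk * r) = M ^ ((kk - 1) * r) * M ^ r := by
      rw [← Real.rpow_add hM0]; ring_nf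
    have e2 : M ^ ((kk - 1) * r) ≤ u ^ ((kk - 1) * r) :=
      Real.rpow_le_rpow (le_of_lt hM0) h (by nlinarith)
    have e3 : M ^ r ≤ 2 * (v ^ (kk * r) * x) := rfactor hr0 hr1 hkk hM hv hx hMvx
    calc M ^ (kk*r) = M ^ ((kk-1)*r) * M ^ r := e1
    _ ≤ u ^ ((kk-1)*r) * (2 * (v ^ (kk*r) * x)) :=
        mul_le_mul e2 e3 (Real.rpow_nonneg (by linarith) r) (by positivity)
    _ = 2 * (u ^ ((kk-1)*r) * v ^ (kk*r) * x) := by ring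
  · have e2 : M ^ (kk * r) ≤ v ^ (kk * r) :=
      Real.rpow_le_rpow (le_of_lt hM0) h (by nlinarith)
    have e3 : v ^ (kk*r) ≤ u ^ ((kk-1)*r) * v ^ (kk*r) * x :=
      mul3_ge (Real.rpow_nonneg (by linarith) _) hu1 hx
    calc M ^ (kk*r) ≤ u ^ ((kk-1)*r) * v ^ (kk*r) * x := le_trans e2 e3
    _ ≤ 2 * (u ^ ((kk-1)*r) * v ^ (kk*r) * x) := by
        have : (0:ℝ) ≤ u ^ ((kk-1)*r) * v ^ (kk*r) * x := by
          apply mul_nonneg (mul_nonneg (Real.rpow_nonneg (by linarith) _)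
            (Real.rpow_nonneg (by linarith) _)) (by linarith)
        linarith

include hr0 hr1 hkk hM hu hv hx hy in
lemma auxW1 (hMor : M ≤ u ∨ M ≤ v) (hMvx : M ≤ 2 * v * x) (hMuy : M ≤ 2 * u * y) :
    M ^ ((kk + 1) * r) ≤ 2 * (u ^ (kk * r) * v ^ (kk * r) * (x * y)) := by
  have hM0 : (0:ℝ) < M := by linarith
  have e1 : M ^ ((kk + 1) * r) = M ^ (kk * r) * M ^ r := by
    rw [← Real.rpow_add hM0]; ring_nf
  have hun : (0:ℝ) ≤ u ^ (kk*r) := Real.rpow_nonneg (by linarith) _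
  have hvn : (0:ℝ) ≤ v ^ (kk*r) := Real.rpow_nonneg (by linarith) _
  rcases hMor with h | h
  · have e2 : M ^ (kk * r) ≤ u ^ (kk * r) :=
      Real.rpow_le_rpow (le_of_lt hM0) h (by nlinarith)
    have e3 : M ^ r ≤ 2 * (v ^ (kk * r) * x) := rfactor hr0 hr1 hkk hM hv hx hMvx
    calc M ^ ((kk+1)*r) = M ^ (kk*r) * M ^ r := e1
    _ ≤ u ^ (kk*r) * (2 * (v ^ (kk*r) * x)) :=
        mul_le_mul e2 e3 (Real.rpow_nonneg (by linarith) r) hun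
    _ = (2 * (u ^ (kk*r) * v ^ (kk*r) * x)) * 1 := by ring
    _ ≤ (2 * (u ^ (kk*r) * v ^ (kk*r) * x)) * y := by
        apply mul_le_mul_of_nonneg_left hy
        apply mul_nonneg (by norm_num)
        exact mul_nonneg (mul_nonneg hun hvn) (by linarith)
    _ = 2 * (u ^ (kk*r) * v ^ (kk*r) * (x * y)) := by ring
  · have e2 : M ^ (kk * r) ≤ v ^ (kk * r) :=
      Real.rpow_le_rpow (le_of_lt hM0) h (by nlinarith)
    have e3 : M ^ r ≤ 2 * (u ^ (kk * r) * y) := rfactor hr0 hr1 hkk hM hu hy hMuy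
    calc M ^ ((kk+1)*r) = M ^ (kk*r) * M ^ r := e1
    _ ≤ v ^ (kk*r) * (2 * (u ^ (kk*r) * y)) :=
        mul_le_mul e2 e3 (Real.rpow_nonneg (by linarith) r) hvn
    _ = (2 * (u ^ (kk*r) * v ^ (kk*r) * y)) * 1 := by ring
    _ ≤ (2 * (u ^ (kk*r) * v ^ (kk*r) * y)) * x := by
        apply mul_le_mul_of_nonneg_left hx
        apply mul_nonneg (by norm_num)
        exact mul_nonneg (mul_nonneg hun hvn) (by linarith)
    _ = 2 * (u ^ (kk*r) * v ^ (kk*r) * (x * y)) := by ring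

include hr0 hr1 hkk hM hu hv hx in
lemma auxW3 (hMor : M ≤ u ∨ M ≤ v) (hMvx : M ≤ 2 * v * x) :
    M ^ ((kk + 1) * r) ≤ 4 * (u ^ ((kk - 1) * r) * v ^ ((kk + 1) * r) * x ^ (2:ℝ)) := by
  have hM0 : (0:ℝ) < M := by linarith
  have hx2 : (1:ℝ) ≤ x ^ (2:ℝ) := aux_one_le_rpow hx (by norm_num)
  have hu1 : (1:ℝ) ≤ u ^ ((kk - 1) * r) := aux_one_le_rpow hu (by nlinarith)
  have hvkn : (0:ℝ) ≤ v ^ ((kk+1)*r) := Real.rpow_nonneg (by linarith) _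
  rcases hMor with h | h
  · have e1 : M ^ ((kk + 1) * r) = M ^ ((kk - 1) * r) * M ^ (2 * r) := by
      rw [← Real.rpow_add hM0]; ring_nf
    have e2 : M ^ ((kk - 1) * r) ≤ u ^ ((kk - 1) * r) :=
      Real.rpow_le_rpow (le_of_lt hM0) h (by nlinarith)
    have e3 : M ^ (2 * r) ≤ 4 * (v ^ ((kk + 1) * r) * x ^ (2:ℝ)) := by
      have h1 : M ^ (2*r) ≤ (2 * v * x) ^ (2*r) :=
        Real.rpow_le_rpow (by linarith) hMvx (by linarith)
      have h2 : (2 * v * x) ^ (2*r) = 2 ^ (2*r) * v ^ (2*r) * x ^ (2*r) := by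
        rw [Real.mul_rpow (by positivity) (by positivity),
          Real.mul_rpow (by norm_num) (by positivity)]
      have h3 : (2:ℝ) ^ (2*r) ≤ 4 := by
        calc (2:ℝ) ^ (2*r) ≤ 2 ^ (2:ℝ) := Real.rpow_le_rpow_of_exponent_le (by norm_num) (by linarith)
        _ = 4 := by rw [show (2:ℝ) = ((2:ℕ):ℝ) by norm_num, Real.rpow_natCast]; norm_num
      have h4 : v ^ (2*r) ≤ v ^ ((kk+1)*r) := Real.rpow_le_rpow_of_exponent_le hv (by nlinarith)
      have h5 : x ^ (2*r) ≤ x ^ (2:ℝ) := Real.rpow_le_rpow_of_exponent_le hx (by linarith)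
      have hvr : (0:ℝ) ≤ v ^ (2*r) := Real.rpow_nonneg (by linarith) _
      have hxr : (0:ℝ) ≤ x ^ (2*r) := Real.rpow_nonneg (by linarith) _
      calc M ^ (2*r) ≤ 2 ^ (2*r) * v ^ (2*r) * x ^ (2*r) := by rw [← h2]; exact h1
      _ ≤ 4 * v ^ ((kk+1)*r) * x ^ (2:ℝ) :=
          mul_le_mul (mul_le_mul h3 h4 hvr (by norm_num)) h5 hxr
            (mul_nonneg (by norm_num) hvkn)
      _ = 4 * (v ^ ((kk+1)*r) * x ^ (2:ℝ)) := by ring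
    calc M ^ ((kk+1)*r) = M ^ ((kk-1)*r) * M ^ (2*r) := e1
    _ ≤ u ^ ((kk-1)*r) * (4 * (v ^ ((kk+1)*r) * x ^ (2:ℝ))) :=
        mul_le_mul e2 e3 (Real.rpow_nonneg (by linarith) _)
          (Real.rpow_nonneg (by linarith) _)
    _ = 4 * (u ^ ((kk-1)*r) * v ^ ((kk+1)*r) * x ^ (2:ℝ)) := by ring
  · have e2 : M ^ ((kk + 1) * r) ≤ v ^ ((kk + 1) * r) :=
      Real.rpow_le_rpow (le_of_lt hM0) h (by nlinarith)
    have e3 : v ^ ((kk+1)*r) ≤ u ^ ((kk-1)*r) * v ^ ((kk+1)*r) * x ^ (2:ℝ) :=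
      mul3_ge hvkn hu1 hx2
    have h4 : (0:ℝ) ≤ u ^ ((kk-1)*r) * v ^ ((kk+1)*r) * x ^ (2:ℝ) := by
      apply mul_nonneg (mul_nonneg (Real.rpow_nonneg (by linarith) _) hvkn)
        (Real.rpow_nonneg (by linarith) _)
    linarith
end Weights

lemma scalar_step {q pA pB dd dA dB c x y z u v M : ℝ}
    (hq : 0 ≤ q) (hc : 0 ≤ c)
    (hx : 1 ≤ x) (hy : 1 ≤ y) (hz0 : 0 ≤ z) (hz : z ≤ 2 * max x y)
    (hu : 1 ≤ u) (hv : 1 ≤ v)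
    (hW : M ^ dd ≤ c * (u ^ dA * v ^ dB * (x ^ (pA - q) * y ^ (pB - q)))) :
    z ^ q * M ^ dd * ((x ^ pA * u ^ dA)⁻¹ * (y ^ pB * v ^ dB)⁻¹) ≤
      (c * 2 ^ q) * ((x ^ q)⁻¹ + (y ^ q)⁻¹) := by
  have hx0 : (0:ℝ) < x := by linarith
  have hy0 : (0:ℝ) < y := by linarith
  have hu0 : (0:ℝ) < u := by linarith
  have hv0 : (0:ℝ) < v := by linarith
  have hxq : (0:ℝ) < x ^ q := Real.rpow_pos_of_pos hx0 q
  have hyq : (0:ℝ) < y ^ q := Real.rpow_pos_of_pos hy0 q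
  have hxpA : (0:ℝ) < x ^ pA := Real.rpow_pos_of_pos hx0 pA
  have hypB : (0:ℝ) < y ^ pB := Real.rpow_pos_of_pos hy0 pB
  have hudA : (0:ℝ) < u ^ dA := Real.rpow_pos_of_pos hu0 dA
  have hvdB : (0:ℝ) < v ^ dB := Real.rpow_pos_of_pos hv0 dB
  have hzq : (0:ℝ) ≤ z ^ q := Real.rpow_nonneg hz0 q
  have expA : x ^ (pA - q) = x ^ pA / x ^ q := Real.rpow_sub hx0 pA q
  have expB : y ^ (pB - q) = y ^ pB / y ^ q := Real.rpow_sub hy0 pB q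
  have step1 : M ^ dd * ((x ^ pA * u ^ dA)⁻¹ * (y ^ pB * v ^ dB)⁻¹) ≤
      c * ((x ^ q)⁻¹ * (y ^ q)⁻¹) := by
    rw [expA, expB] at hW
    have hinv : (0:ℝ) < (x ^ pA * u ^ dA)⁻¹ * (y ^ pB * v ^ dB)⁻¹ := by positivity
    calc M ^ dd * ((x ^ pA * u ^ dA)⁻¹ * (y ^ pB * v ^ dB)⁻¹)
        ≤ (c * (u ^ dA * v ^ dB * (x ^ pA / x ^ q * (y ^ pB / y ^ q)))) *
            ((x ^ pA * u ^ dA)⁻¹ * (y ^ pB * v ^ dB)⁻¹) :=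
          mul_le_mul_of_nonneg_right hW (le_of_lt hinv)
      _ = c * ((x ^ q)⁻¹ * (y ^ q)⁻¹) := by field_simp
  calc z ^ q * M ^ dd * ((x ^ pA * u ^ dA)⁻¹ * (y ^ pB * v ^ dB)⁻¹)
      = z ^ q * (M ^ dd * ((x ^ pA * u ^ dA)⁻¹ * (y ^ pB * v ^ dB)⁻¹)) := by ring
    _ ≤ z ^ q * (c * ((x ^ q)⁻¹ * (y ^ q)⁻¹)) := mul_le_mul_of_nonneg_left step1 hzq
    _ = c * (z ^ q * ((x ^ q)⁻¹ * (y ^ q)⁻¹)) := by ring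
    _ ≤ c * (2 ^ q * ((x ^ q)⁻¹ + (y ^ q)⁻¹)) :=
        mul_le_mul_of_nonneg_left (aux_core hq hx hy hz0 hz) hc
    _ = (c * 2 ^ q) * ((x ^ q)⁻¹ + (y ^ q)⁻¹) := by ring

lemma jap_base {a b : ℝ} (ha : 1 ≤ a) (hb : 1 ≤ b) : a ≤ 2 * b * jap (a - b) := by
  have h1 : a - b ≤ |a - b| := le_abs_self _
  have h2 : |a - b| ≤ jap (a - b) := abs_le_jap _
  have h3 : 1 ≤ jap (a - b) := one_le_jap _
  nlinarith
lemma jap_tri (a b c : ℝ) : jap (a - c) ≤ 2 * max (jap (a - b)) (jap (b - c)) := by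
  have h1 : 1 ≤ jap (a - b) := one_le_jap _
  have h2 : 1 ≤ jap (b - c) := one_le_jap _
  have h3 : |a - c| ≤ |a - b| + |b - c| := abs_sub_le a b c
  have h4 : jap (a - b) ≤ max (jap (a - b)) (jap (b - c)) := le_max_left _ _
  have h5 : jap (b - c) ≤ max (jap (a - b)) (jap (b - c)) := le_max_right _ _
  apply max_le (by linarith)
  calc |a - c| ≤ |a - b| + |b - c| := h3
  _ ≤ jap (a - b) + jap (b - c) := add_le_add (abs_le_jap _) (abs_le_jap _)
  _ ≤ 2 * max (jap (a - b)) (jap (b - c)) := by linarith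

lemma pnat_one_le (m : ℕ+) : (1:ℝ) ≤ ((m : ℕ) : ℝ) := by exact_mod_cast m.one_le
lemma pnat_max_coe (m n : ℕ+) :
    (((max m n : ℕ+) : ℕ) : ℝ) = max ((m:ℕ):ℝ) ((n:ℕ):ℝ) := by
  rcases le_total m n with h | h
  · rw [max_eq_right h, max_eq_right]; exact_mod_cast h
  · rw [max_eq_left h, max_eq_left]; exact_mod_cast h

/-- The key pointwise inequality on matrix element weights. -/
def KeyIneq (q δ pA δA pB δB K : ℝ) : Prop := ∀ m n l : ℕ+,
    jap (((m:ℕ):ℝ) - ((n:ℕ):ℝ)) ^ q * (((max m n : ℕ+):ℕ):ℝ) ^ (2*δ) *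
      ((jap (((m:ℕ):ℝ) - ((l:ℕ):ℝ)) ^ pA * (((max m l : ℕ+):ℕ):ℝ) ^ (2*δA))⁻¹ *
       (jap (((l:ℕ):ℝ) - ((n:ℕ):ℝ)) ^ pB * (((max l n : ℕ+):ℕ):ℝ) ^ (2*δB))⁻¹) ≤
    K * ((jap (((m:ℕ):ℝ) - ((l:ℕ):ℝ)) ^ q)⁻¹ + (jap (((l:ℕ):ℝ) - ((n:ℕ):ℝ)) ^ q)⁻¹)

lemma keyIneq_of_W (q δ pA δA pB δB c : ℝ) (hq : 0 ≤ q) (hc : 0 ≤ c)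
    (hW : ∀ M u v x y : ℝ, 1 ≤ M → 1 ≤ u → 1 ≤ v → 1 ≤ x → 1 ≤ y →
      (M ≤ u ∨ M ≤ v) → M ≤ 2 * v * x → M ≤ 2 * u * y →
      M ^ (2*δ) ≤ c * (u ^ (2*δA) * v ^ (2*δB) * (x ^ (pA - q) * y ^ (pB - q)))) :
    KeyIneq q δ pA δA pB δB (c * 2 ^ q) := by
  intro m n l
  set am := ((m:ℕ):ℝ) with ham
  set an := ((n:ℕ):ℝ) with han
  set al := ((l:ℕ):ℝ) with hal
  have h1m : 1 ≤ am := pnat_one_le m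
  have h1n : 1 ≤ an := pnat_one_le n
  have h1l : 1 ≤ al := pnat_one_le l
  rw [pnat_max_coe m n, pnat_max_coe m l, pnat_max_coe l n]
  set x := jap (am - al) with hx'
  set y := jap (al - an) with hy'
  set z := jap (am - an) with hz'
  have hx : 1 ≤ x := one_le_jap _
  have hy : 1 ≤ y := one_le_jap _
  have hz0 : 0 ≤ z := le_trans zero_le_one (one_le_jap _)
  have hz : z ≤ 2 * max x y := jap_tri am al an
  set u := max am al
  set v := max al an
  set M := max am an
  have hu : 1 ≤ u := le_trans h1m (le_max_left _ _)
  have hv : 1 ≤ v := le_trans h1l (le_max_left _ _)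
  have hM : 1 ≤ M := le_trans h1m (le_max_left _ _)
  have hMor : M ≤ u ∨ M ≤ v := by
    rcases le_total am an with h | h
    · exact Or.inr (max_le (le_trans h (le_max_right al an)) (le_max_right al an))
    · exact Or.inl (max_le (le_max_left am al) (le_trans h (le_max_left am al)))
  have hMvx : M ≤ 2 * v * x := by
    apply max_le
    · calc am ≤ 2 * al * x := jap_base h1m h1l
      _ ≤ 2 * v * x := by
          apply mul_le_mul_of_nonneg_right _ (by linarith)
          have : al ≤ v := le_max_left _ _
          linarith
    · have h1 : an ≤ v := le_max_right _ _
      nlinarith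
  have hMuy : M ≤ 2 * u * y := by
    apply max_le
    · have h1 : am ≤ u := le_max_left _ _
      nlinarith
    · calc an ≤ 2 * al * jap (an - al) := jap_base h1n h1l
      _ = 2 * al * y := by rw [hy', jap_sub_comm]
      _ ≤ 2 * u * y := by
          apply mul_le_mul_of_nonneg_right _ (by linarith)
          have : al ≤ u := le_max_right _ _
          linarith
  exact scalar_step hq hc hx hy hz0 hz hu hv
    (hW M u v x y hM hu hv hx hy hMor hMvx hMuy)

lemma zeta_summable {q : ℝ} (hq : 1 < q) :
    Summable (fun j : ℕ+ => (((j:ℕ):ℝ) ^ q)⁻¹) :=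
  (Real.summable_nat_rpow_inv.mpr hq).comp_injective PNat.coe_injective

lemma jap_rpow_inv_le_one {t q : ℝ} (hq : 0 ≤ q) : (jap t ^ q)⁻¹ ≤ 1 := by
  have h1 : (1:ℝ) ≤ jap t ^ q := by
    calc (1:ℝ) = 1 ^ q := (Real.one_rpow q).symm
    _ ≤ jap t ^ q := Real.rpow_le_rpow (by norm_num) (one_le_jap t) hq
  rw [inv_le_one_iff₀]; right; exact h1

lemma japsum {q : ℝ} (hq : 1 < q) (m : ℕ+) :
    Summable (fun l : ℕ+ => (jap (((m:ℕ):ℝ) - ((l:ℕ):ℝ)) ^ q)⁻¹) ∧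
    ∑' l : ℕ+, (jap (((m:ℕ):ℝ) - ((l:ℕ):ℝ)) ^ q)⁻¹ ≤ 1 + 2 * rzeta q := by
  classical
  have hq0 : (0:ℝ) ≤ q := by linarith
  set g : ℕ+ → ℝ := fun j => (((j:ℕ):ℝ) ^ q)⁻¹ with hg
  have hg0 : ∀ j, 0 ≤ g j := fun j => by positivity
  have hgsum : Summable g := zeta_summable hq
  set f : ℕ+ → ℝ := fun l => (jap (((m:ℕ):ℝ) - ((l:ℕ):ℝ)) ^ q)⁻¹ with hf
  have hf0 : ∀ l, 0 ≤ f l := fun l => by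
    have := one_le_jap (((m:ℕ):ℝ) - ((l:ℕ):ℝ)); positivity
  have hf1 : ∀ l, f l ≤ 1 := fun l => jap_rpow_inv_le_one hq0
  have flt : ∀ l : ℕ+, l < m → f l = g (m - l) := by
    intro l hl
    have hcast : (((m - l : ℕ+):ℕ):ℝ) = ((m:ℕ):ℝ) - ((l:ℕ):ℝ) := by
      rw [PNat.sub_coe, if_pos hl]
      have : (l:ℕ) ≤ (m:ℕ) := le_of_lt (by exact_mod_cast hl)
      push_cast [Nat.cast_sub this]; ring
    have habs : jap (((m:ℕ):ℝ) - ((l:ℕ):ℝ)) = (((m - l : ℕ+):ℕ):ℝ) := by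
      rw [hcast]
      have h1 : (1:ℝ) ≤ ((m:ℕ):ℝ) - ((l:ℕ):ℝ) := by
        have : (l:ℕ) + 1 ≤ (m:ℕ) := by exact_mod_cast hl
        have := (Nat.cast_le (α := ℝ)).mpr this
        push_cast at this; linarith
      unfold jap
      rw [abs_of_nonneg (by linarith), max_eq_right (by linarith)]
    simp only [hf, hg, habs]
  have fgt : ∀ l : ℕ+, m < l → f l = g (l - m) := by
    intro l hl
    have hcast : (((l - m : ℕ+):ℕ):ℝ) = ((l:ℕ):ℝ) - ((m:ℕ):ℝ) := by
      rw [PNat.sub_coe, if_pos hl]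
      have : (m:ℕ) ≤ (l:ℕ) := le_of_lt (by exact_mod_cast hl)
      push_cast [Nat.cast_sub this]; ring
    have habs : jap (((m:ℕ):ℝ) - ((l:ℕ):ℝ)) = (((l - m : ℕ+):ℕ):ℝ) := by
      rw [hcast]
      have h1 : (1:ℝ) ≤ ((l:ℕ):ℝ) - ((m:ℕ):ℝ) := by
        have : (m:ℕ) + 1 ≤ (l:ℕ) := by exact_mod_cast hl
        have := (Nat.cast_le (α := ℝ)).mpr this
        push_cast at this; linarith
      unfold jap
      rw [abs_of_nonpos (by linarith), max_eq_right (by linarith)]; ring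
    simp only [hf, hg, habs]
  have sub_part : ∀ (t : Finset ℕ+) (φ : ℕ+ → ℕ+), (∀ l ∈ t, ∀ l' ∈ t, φ l = φ l' → l = l') →
      (∀ l ∈ t, f l = g (φ l)) → ∑ l ∈ t, f l ≤ rzeta q := by
    intro t φ hinj hval
    calc ∑ l ∈ t, f l = ∑ l ∈ t, g (φ l) := Finset.sum_congr rfl hval
    _ = ∑ j ∈ t.image φ, g j := (Finset.sum_image hinj).symm
    _ ≤ ∑' j, g j := Summable.sum_le_tsum _ (fun j _ => hg0 j) hgsum
    _ = rzeta q := rfl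
  have key : ∀ s : Finset ℕ+, ∑ l ∈ s, f l ≤ 1 + 2 * rzeta q := by
    intro s
    have hsplit : ∑ l ∈ s, f l =
        ∑ l ∈ s.filter (· < m), f l +
        (∑ l ∈ (s.filter (fun l => ¬ l < m)).filter (fun l => m < l), f l +
         ∑ l ∈ (s.filter (fun l => ¬ l < m)).filter (fun l => ¬ m < l), f l) := by
      rw [Finset.sum_filter_add_sum_filter_not (s.filter (fun l => ¬ l < m)) (fun l => m < l) f]
      rw [Finset.sum_filter_add_sum_filter_not s (· < m) f]
    have h1 : ∑ l ∈ s.filter (· < m), f l ≤ rzeta q := by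
      apply sub_part _ (fun l => m - l)
      · intro l hl l' hl' hφ
        have hlm := (Finset.mem_filter.mp hl).2
        have hlm' := (Finset.mem_filter.mp hl').2
        have : ((m - l : ℕ+):ℕ) = ((m - l' : ℕ+):ℕ) := by rw [hφ]
        rw [PNat.sub_coe, if_pos hlm, PNat.sub_coe, if_pos hlm'] at this
        have h1 : (l:ℕ) < (m:ℕ) := by exact_mod_cast hlm
        have h2 : (l':ℕ) < (m:ℕ) := by exact_mod_cast hlm'
        apply PNat.coe_injective; omega
      · intro l hl; exact flt l (Finset.mem_filter.mp hl).2
    have h2 : ∑ l ∈ (s.filter (fun l => ¬ l < m)).filter (fun l => m < l), f l ≤ rzeta q := by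
      apply sub_part _ (fun l => l - m)
      · intro l hl l' hl' hφ
        have hlm := (Finset.mem_filter.mp hl).2
        have hlm' := (Finset.mem_filter.mp hl').2
        have : ((l - m : ℕ+):ℕ) = ((l' - m : ℕ+):ℕ) := by rw [hφ]
        rw [PNat.sub_coe, if_pos hlm, PNat.sub_coe, if_pos hlm'] at this
        have h1 : (m:ℕ) < (l:ℕ) := by exact_mod_cast hlm
        have h2 : (m:ℕ) < (l':ℕ) := by exact_mod_cast hlm'
        apply PNat.coe_injective; omega
      · intro l hl; exact fgt l (Finset.mem_filter.mp hl).2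
    have h3 : ∑ l ∈ (s.filter (fun l => ¬ l < m)).filter (fun l => ¬ m < l), f l ≤ 1 := by
      have hsub : (s.filter (fun l => ¬ l < m)).filter (fun l => ¬ m < l) ⊆ {m} := by
        intro l hl
        have ha := (Finset.mem_filter.mp hl).2
        have hb := (Finset.mem_filter.mp (Finset.mem_filter.mp hl).1).2
        have : l = m := le_antisymm (not_lt.mp ha) (not_lt.mp hb)
        simp [this]
      calc ∑ l ∈ (s.filter (fun l => ¬ l < m)).filter (fun l => ¬ m < l), f l
          ≤ ∑ l ∈ ({m} : Finset ℕ+), f l :=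
            Finset.sum_le_sum_of_subset_of_nonneg hsub (fun i _ _ => hf0 i)
        _ = f m := Finset.sum_singleton f m
        _ ≤ 1 := hf1 m
    linarith
  have hsummable : Summable f := summable_of_sum_le hf0 key
  exact ⟨hsummable, Summable.tsum_le_of_sum_le hsummable key⟩

lemma jap_rpow_pos (t q : ℝ) : 0 < jap t ^ q :=
  Real.rpow_pos_of_pos (lt_of_lt_of_le one_pos (one_le_jap t)) q

lemma pnat_rpow_pos (m : ℕ+) (q : ℝ) : (0:ℝ) < ((m:ℕ):ℝ) ^ q :=
  Real.rpow_pos_of_pos (lt_of_lt_of_le one_pos (pnat_one_le m)) q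

omit [CompleteSpace 𝓗] in
lemma wnorm_nonneg (P : ℕ+ → 𝓗 →L[ℂ] 𝓗) (p δ : ℝ) (A : 𝓗 →L[ℂ] 𝓗) (m n : ℕ+) :
    0 ≤ wnorm P p δ A m n := by
  unfold wnorm
  have h1 := jap_rpow_pos (((m : ℕ) : ℝ) - ((n : ℕ) : ℝ)) p
  have h2 := pnat_rpow_pos (max m n) (2 * δ)
  positivity

lemma op_bound (P : ℕ+ → 𝓗 →L[ℂ] 𝓗) (hP : ProjFamily P) (A B : 𝓗 →L[ℂ] 𝓗)
    (m n : ℕ+) (c : ℕ+ → ℝ) (hc : Summable c)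
    (hle : ∀ l, ‖(P m).comp (A.comp (P l))‖ * ‖(P l).comp (B.comp (P n))‖ ≤ c l) :
    ‖(P m).comp ((A.comp B).comp (P n))‖ ≤ ∑' l, c l := by
  have hc0 : ∀ l, 0 ≤ c l := fun l =>
    le_trans (mul_nonneg (norm_nonneg _) (norm_nonneg _)) (hle l)
  apply opNorm_le_bound _ (tsum_nonneg hc0)
  intro ψ
  have hs : HasSum (fun l => P l (B (P n ψ))) (B (P n ψ)) := hP.2.2.2.2 _
  have hs2 : HasSum (fun l => ((P m).comp A) (P l (B (P n ψ))))
      (((P m).comp A) (B (P n ψ))) := ((P m).comp A).hasSum hs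
  have hterm : ∀ l, ((P m).comp A) (P l (B (P n ψ))) =
      ((P m).comp (A.comp (P l))) (((P l).comp (B.comp (P n))) ψ) := by
    intro l
    have hid : P l (P l (B (P n ψ))) = P l (B (P n ψ)) := by
      have h := hP.2.1 l
      calc P l (P l (B (P n ψ))) = ((P l).comp (P l)) (B (P n ψ)) := rfl
      _ = P l (B (P n ψ)) := by rw [h]
    simp only [coe_comp', Function.comp_apply, hid]
  have hnorm : ∀ l, ‖((P m).comp A) (P l (B (P n ψ)))‖ ≤ c l * ‖ψ‖ := by
    intro l
    rw [hterm l]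
    calc ‖((P m).comp (A.comp (P l))) (((P l).comp (B.comp (P n))) ψ)‖
        ≤ ‖(P m).comp (A.comp (P l))‖ * ‖((P l).comp (B.comp (P n))) ψ‖ :=
          le_opNorm _ _
      _ ≤ ‖(P m).comp (A.comp (P l))‖ * (‖(P l).comp (B.comp (P n))‖ * ‖ψ‖) :=
          mul_le_mul_of_nonneg_left (le_opNorm _ _) (norm_nonneg _)
      _ = (‖(P m).comp (A.comp (P l))‖ * ‖(P l).comp (B.comp (P n))‖) * ‖ψ‖ := by ring
      _ ≤ c l * ‖ψ‖ := mul_le_mul_of_nonneg_right (hle l) (norm_nonneg _)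
  have hsummable : Summable (fun l => ‖((P m).comp A) (P l (B (P n ψ)))‖) :=
    Summable.of_nonneg_of_le (fun l => norm_nonneg _) hnorm (hc.mul_right ‖ψ‖)
  have heq : ((P m).comp ((A.comp B).comp (P n))) ψ = ((P m).comp A) (B (P n ψ)) := rfl
  rw [heq, ← hs2.tsum_eq]
  calc ‖∑' l, ((P m).comp A) (P l (B (P n ψ)))‖
      ≤ ∑' l, ‖((P m).comp A) (P l (B (P n ψ)))‖ := norm_tsum_le_tsum_norm hsummable
    _ ≤ ∑' l, c l * ‖ψ‖ := Summable.tsum_le_tsum hnorm hsummable (hc.mul_right ‖ψ‖)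
    _ = (∑' l, c l) * ‖ψ‖ := tsum_mul_right

lemma combine {P : ℕ+ → 𝓗 →L[ℂ] 𝓗} (hP : ProjFamily P)
    {q δ pA δA pB δB K a b : ℝ} (hq : 1 < q) (hK : 0 ≤ K)
    (A B : 𝓗 →L[ℂ] 𝓗)
    (ha : ∀ m n : ℕ+, wnorm P pA δA A m n ≤ a)
    (hb : ∀ m n : ℕ+, wnorm P pB δB B m n ≤ b)
    (hkey : KeyIneq q δ pA δA pB δB K) :
    ∀ m n : ℕ+, wnorm P q δ (A.comp B) m n ≤ K * (2 * (1 + 2 * rzeta q)) * (a * b) := by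
  intro m n
  have ha0 : 0 ≤ a := le_trans (wnorm_nonneg P pA δA A 1 1) (ha 1 1)
  have hb0 : 0 ≤ b := le_trans (wnorm_nonneg P pB δB B 1 1) (hb 1 1)
  set F : ℕ+ → ℝ := fun l => (jap (((m:ℕ):ℝ) - ((l:ℕ):ℝ)) ^ q)⁻¹ with hF
  set G : ℕ+ → ℝ := fun l => (jap (((l:ℕ):ℝ) - ((n:ℕ):ℝ)) ^ q)⁻¹ with hG
  have hFsum : Summable F := (japsum hq m).1
  have hGeq : G = fun l : ℕ+ => (jap (((n:ℕ):ℝ) - ((l:ℕ):ℝ)) ^ q)⁻¹ := by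
    funext l; rw [hG]; rw [jap_sub_comm]
  have hGsum : Summable G := by rw [hGeq]; exact (japsum hq n).1
  have hFbd : ∑' l, F l ≤ 1 + 2 * rzeta q := (japsum hq m).2
  have hGbd : ∑' l, G l ≤ 1 + 2 * rzeta q := by rw [hGeq]; exact (japsum hq n).2
  set zM : ℝ := jap (((m:ℕ):ℝ) - ((n:ℕ):ℝ)) ^ q * (((max m n : ℕ+):ℕ):ℝ) ^ (2*δ) with hzM
  have hzM0 : 0 < zM := mul_pos (jap_rpow_pos _ _) (pnat_rpow_pos _ _)
  set c : ℕ+ → ℝ := fun l => K * a * b * zM⁻¹ * (F l + G l) with hc'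
  have hcsum : Summable c := ((hFsum.add hGsum).mul_left _)
  have hle : ∀ l, ‖(P m).comp (A.comp (P l))‖ * ‖(P l).comp (B.comp (P n))‖ ≤ c l := by
    intro l
    set XA : ℝ := jap (((m:ℕ):ℝ) - ((l:ℕ):ℝ)) ^ pA * (((max m l : ℕ+):ℕ):ℝ) ^ (2*δA) with hXA
    set XB : ℝ := jap (((l:ℕ):ℝ) - ((n:ℕ):ℝ)) ^ pB * (((max l n : ℕ+):ℕ):ℝ) ^ (2*δB) with hXB
    have hXA0 : 0 < XA := mul_pos (jap_rpow_pos _ _) (pnat_rpow_pos _ _)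
    have hXB0 : 0 < XB := mul_pos (jap_rpow_pos _ _) (pnat_rpow_pos _ _)
    have hA' : ‖(P m).comp (A.comp (P l))‖ ≤ a * XA⁻¹ := by
      have h := ha m l
      unfold wnorm at h
      rw [le_mul_inv_iff₀ hXA0]
      calc ‖(P m).comp (A.comp (P l))‖ * XA = XA * ‖(P m).comp (A.comp (P l))‖ := by ring
      _ ≤ a := h
    have hB' : ‖(P l).comp (B.comp (P n))‖ ≤ b * XB⁻¹ := by
      have h := hb l n
      unfold wnorm at h
      rw [le_mul_inv_iff₀ hXB0]
      calc ‖(P l).comp (B.comp (P n))‖ * XB = XB * ‖(P l).comp (B.comp (P n))‖ := by ring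
      _ ≤ b := h
    have hkey' : zM * (XA⁻¹ * XB⁻¹) ≤ K * (F l + G l) := hkey m n l
    calc ‖(P m).comp (A.comp (P l))‖ * ‖(P l).comp (B.comp (P n))‖
        ≤ (a * XA⁻¹) * (b * XB⁻¹) :=
          mul_le_mul hA' hB' (norm_nonneg _) (by positivity)
      _ = (a * b) * (zM⁻¹ * (zM * (XA⁻¹ * XB⁻¹))) := by
          field_simp
      _ ≤ (a * b) * (zM⁻¹ * (K * (F l + G l))) := by
          apply mul_le_mul_of_nonneg_left _ (mul_nonneg ha0 hb0)
          exact mul_le_mul_of_nonneg_left hkey' (le_of_lt (inv_pos.mpr hzM0))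
      _ = c l := by rw [hc']; ring
  have hop := op_bound P hP A B m n c hcsum hle
  have htsum : ∑' l, c l = K * a * b * zM⁻¹ * (∑' l, (F l + G l)) := tsum_mul_left
  have htsum2 : ∑' l, (F l + G l) ≤ 2 * (1 + 2 * rzeta q) := by
    rw [Summable.tsum_add hFsum hGsum]; linarith
  calc wnorm P q δ (A.comp B) m n = zM * ‖(P m).comp ((A.comp B).comp (P n))‖ := rfl
    _ ≤ zM * ∑' l, c l := mul_le_mul_of_nonneg_left hop (le_of_lt hzM0)
    _ = K * a * b * (∑' l, (F l + G l)) := by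
        rw [htsum]
        field_simp
    _ ≤ K * a * b * (2 * (1 + 2 * rzeta q)) := by
        apply mul_le_mul_of_nonneg_left htsum2
        exact mul_nonneg (mul_nonneg hK ha0) hb0
    _ = K * (2 * (1 + 2 * rzeta q)) * (a * b) := by ring

end Aux

/-- Corollary 2.3: three product estimates for the classes `𝒴`,
with constant `C_p = 2^{p+1}(1+2ζ(p-1))`, in both orders of the factors. -/
theorem statement8
    (P : ℕ+ → 𝓗 →L[ℂ] 𝓗) (hP : ProjFamily P)
    (p : ℝ) (hp : 2 < p) (k : ℕ) (hk : 1 ≤ k) (γ : ℝ) (hγ0 : 0 < γ) (hγh : γ < 1 / 2)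
    (A B : 𝓗 →L[ℂ] 𝓗) :
    (∀ a b : ℝ,
      (∀ m n : ℕ+, wnorm P p ((k : ℝ) * γ) A m n ≤ a) →
      (∀ m n : ℕ+, wnorm P p ((k : ℝ) * γ) B m n ≤ b) →
      ∀ m n : ℕ+,
        wnorm P (p - 1) (((k : ℝ) + 1) * γ) (A.comp B) m n ≤ Cconst p * a * b ∧
        wnorm P (p - 1) (((k : ℝ) + 1) * γ) (B.comp A) m n ≤ Cconst p * a * b) ∧
    (∀ a b : ℝ,
      (∀ m n : ℕ+, wnorm P p (((k : ℝ) - 1) * γ) A m n ≤ a) →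
      (∀ m n : ℕ+, wnorm P (p - 1) ((k : ℝ) * γ) B m n ≤ b) →
      ∀ m n : ℕ+,
        wnorm P (p - 1) ((k : ℝ) * γ) (A.comp B) m n ≤ Cconst p * a * b ∧
        wnorm P (p - 1) ((k : ℝ) * γ) (B.comp A) m n ≤ Cconst p * a * b) ∧
    (∀ a b : ℝ,
      (∀ m n : ℕ+, wnorm P (p + 1) (((k : ℝ) - 1) * γ) A m n ≤ a) →
      (∀ m n : ℕ+, wnorm P (p - 1) (((k : ℝ) + 1) * γ) B m n ≤ b) →
      ∀ m n : ℕ+,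
        wnorm P (p - 1) (((k : ℝ) + 1) * γ) (A.comp B) m n ≤ 2 * Cconst p * a * b ∧
        wnorm P (p - 1) (((k : ℝ) + 1) * γ) (B.comp A) m n ≤ 2 * Cconst p * a * b)  := by
  have hq : (1:ℝ) < p - 1 := by linarith
  have hq0 : (0:ℝ) ≤ p - 1 := by linarith
  have hkk : (1:ℝ) ≤ (k:ℝ) := by exact_mod_cast hk
  have hr0 : (0:ℝ) < 2 * γ := by linarith
  have hr1 : 2 * γ ≤ 1 := by linarith
  have h2K : (0:ℝ) ≤ 2 * 2 ^ (p-1) := by positivity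
  have h4K : (0:ℝ) ≤ 4 * 2 ^ (p-1) := by positivity
  have h22 : (2:ℝ) ^ (2:ℝ) = 4 := by
    rw [show (2:ℝ) = ((2:ℕ):ℝ) from by norm_num, Real.rpow_natCast]; norm_num
  have hC1 : (2 * 2 ^ (p-1)) * (2 * (1 + 2 * rzeta (p-1))) = Cconst p := by
    unfold Cconst
    rw [show p + 1 = (p-1) + 2 by ring, Real.rpow_add (by norm_num : (0:ℝ) < 2), h22]
    ring
  have hC3 : (4 * 2 ^ (p-1)) * (2 * (1 + 2 * rzeta (p-1))) = 2 * Cconst p := by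
    unfold Cconst
    rw [show p + 1 = (p-1) + 2 by ring, Real.rpow_add (by norm_num : (0:ℝ) < 2), h22]
    ring
  have key1 : KeyIneq (p-1) (((k:ℝ)+1)*γ) p ((k:ℝ)*γ) p ((k:ℝ)*γ) (2 * 2 ^ (p-1)) := by
    apply keyIneq_of_W _ _ _ _ _ _ 2 hq0 (by norm_num)
    intro M u v x y hM hu hv hx hy hMor hMvx hMuy
    rw [show 2*(((k:ℝ)+1)*γ) = ((k:ℝ)+1)*(2*γ) by ring,
        show 2*((k:ℝ)*γ) = (k:ℝ)*(2*γ) by ring,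
        show p - (p-1) = (1:ℝ) by ring, Real.rpow_one, Real.rpow_one]
    exact auxW1 hr0 hr1 hkk hM hu hv hx hy hMor hMvx hMuy
  have key2 : KeyIneq (p-1) ((k:ℝ)*γ) p (((k:ℝ)-1)*γ) (p-1) ((k:ℝ)*γ) (2 * 2 ^ (p-1)) := by
    apply keyIneq_of_W _ _ _ _ _ _ 2 hq0 (by norm_num)
    intro M u v x y hM hu hv hx hy hMor hMvx hMuy
    rw [show 2*((k:ℝ)*γ) = (k:ℝ)*(2*γ) by ring,
        show 2*(((k:ℝ)-1)*γ) = ((k:ℝ)-1)*(2*γ) by ring,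
        show p - (p-1) = (1:ℝ) by ring, show p - 1 - (p-1) = (0:ℝ) by ring,
        Real.rpow_one, Real.rpow_zero, mul_one]
    exact auxW2 hr0 hr1 hkk hM hu hv hx hMor hMvx
  have key2r : KeyIneq (p-1) ((k:ℝ)*γ) (p-1) ((k:ℝ)*γ) p (((k:ℝ)-1)*γ) (2 * 2 ^ (p-1)) := by
    apply keyIneq_of_W _ _ _ _ _ _ 2 hq0 (by norm_num)
    intro M u v x y hM hu hv hx hy hMor hMvx hMuy
    rw [show 2*((k:ℝ)*γ) = (k:ℝ)*(2*γ) by ring,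
        show 2*(((k:ℝ)-1)*γ) = ((k:ℝ)-1)*(2*γ) by ring,
        show p - (p-1) = (1:ℝ) by ring, show p - 1 - (p-1) = (0:ℝ) by ring,
        Real.rpow_one, Real.rpow_zero, one_mul]
    exact le_of_le_of_eq (auxW2 hr0 hr1 hkk hM hv hu hy hMor.symm hMuy) (by ring)
  have key3 : KeyIneq (p-1) (((k:ℝ)+1)*γ) (p+1) (((k:ℝ)-1)*γ) (p-1) (((k:ℝ)+1)*γ)
      (4 * 2 ^ (p-1)) := by
    apply keyIneq_of_W _ _ _ _ _ _ 4 hq0 (by norm_num)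
    intro M u v x y hM hu hv hx hy hMor hMvx hMuy
    rw [show 2*(((k:ℝ)+1)*γ) = ((k:ℝ)+1)*(2*γ) by ring,
        show 2*(((k:ℝ)-1)*γ) = ((k:ℝ)-1)*(2*γ) by ring,
        show p + 1 - (p-1) = (2:ℝ) by ring, show p - 1 - (p-1) = (0:ℝ) by ring,
        Real.rpow_zero, mul_one]
    exact auxW3 hr0 hr1 hkk hM hu hv hx hMor hMvx
  have key3r : KeyIneq (p-1) (((k:ℝ)+1)*γ) (p-1) (((k:ℝ)+1)*γ) (p+1) (((k:ℝ)-1)*γ)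
      (4 * 2 ^ (p-1)) := by
    apply keyIneq_of_W _ _ _ _ _ _ 4 hq0 (by norm_num)
    intro M u v x y hM hu hv hx hy hMor hMvx hMuy
    rw [show 2*(((k:ℝ)+1)*γ) = ((k:ℝ)+1)*(2*γ) by ring,
        show 2*(((k:ℝ)-1)*γ) = ((k:ℝ)-1)*(2*γ) by ring,
        show p + 1 - (p-1) = (2:ℝ) by ring, show p - 1 - (p-1) = (0:ℝ) by ring,
        Real.rpow_zero, one_mul]
    exact le_of_le_of_eq (auxW3 hr0 hr1 hkk hM hv hu hy hMor.symm hMuy) (by ring)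
  refine ⟨?_, ?_, ?_⟩
  · intro a b ha hb m n
    constructor
    · calc wnorm P (p-1) (((k:ℝ)+1)*γ) (A.comp B) m n
          ≤ (2 * 2 ^ (p-1)) * (2 * (1 + 2 * rzeta (p-1))) * (a * b) :=
            combine hP hq h2K A B ha hb key1 m n
        _ = Cconst p * a * b := by rw [hC1]; ring
    · calc wnorm P (p-1) (((k:ℝ)+1)*γ) (B.comp A) m n
          ≤ (2 * 2 ^ (p-1)) * (2 * (1 + 2 * rzeta (p-1))) * (b * a) :=
            combine hP hq h2K B A hb ha key1 m n
        _ = Cconst p * a * b := by rw [hC1]; ring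
  · intro a b ha hb m n
    constructor
    · calc wnorm P (p-1) ((k:ℝ)*γ) (A.comp B) m n
          ≤ (2 * 2 ^ (p-1)) * (2 * (1 + 2 * rzeta (p-1))) * (a * b) :=
            combine hP hq h2K A B ha hb key2 m n
        _ = Cconst p * a * b := by rw [hC1]; ring
    · calc wnorm P (p-1) ((k:ℝ)*γ) (B.comp A) m n
          ≤ (2 * 2 ^ (p-1)) * (2 * (1 + 2 * rzeta (p-1))) * (b * a) :=
            combine hP hq h2K B A hb ha key2r m n
        _ = Cconst p * a * b := by rw [hC1]; ring
  · intro a b ha hb m n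
    constructor
    · calc wnorm P (p-1) (((k:ℝ)+1)*γ) (A.comp B) m n
          ≤ (4 * 2 ^ (p-1)) * (2 * (1 + 2 * rzeta (p-1))) * (a * b) :=
            combine hP hq h4K A B ha hb key3 m n
        _ = 2 * Cconst p * a * b := by rw [hC3]; ring
    · calc wnorm P (p-1) (((k:ℝ)+1)*γ) (B.comp A) m n
          ≤ (4 * 2 ^ (p-1)) * (2 * (1 + 2 * rzeta (p-1))) * (b * a) :=
            combine hP hq h4K B A hb ha key3r m n
        _ = 2 * Cconst p * a * b := by rw [hC3]; ring


end
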